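/- arXiv:1411.0590 — 3 statements merged into one kernel-verified Lean document; each statement's English description precedes it below -/
import Mathlib

section
/- Let φ ∈ Φ. If φ has a cycle, then there exists N ≥ 2 such that det(I − M_n(φ)) = 0 for all n ≥ N. -/
/-- The local function `φ_n` on `{0,...,n}`. -/
def localFun (φ : ℕ → ℕ) (n : ℕ) (x : ℕ) : ℕ :=
  if 1 ≤ x ∧ x ≤ n ∧ 1 ≤ φ x ∧ φ x ≤ n then φ x else 0

/-- The matrix `M_n(φ)` whose `j`-th column is `e_{φ_n(j)}`. -/
def Mloc (φ : ℕ → ℕ) (n : ℕ) : Matrix (Fin n) (Fin n) ℤ :=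
  fun i j => if localFun φ n ((j : ℕ) + 1) = (i : ℕ) + 1 then 1 else 0

theorem stmt14 (φ : ℕ → ℕ) (hφ0 : φ 0 = 0) (hfix : ∀ x, 1 ≤ x → φ x ≠ x)
    (x m : ℕ) (hx : 1 ≤ x) (hm : 2 ≤ m) (hcyc : φ^[m] x = x) :
    ∃ N, 2 ≤ N ∧ ∀ n, N ≤ n → (1 - Mloc φ n).det = 0 := by
  classical
  set B := (Finset.range (m+1)).sup (fun k => φ^[k] x) with hB
  refine ⟨max 2 B, le_max_left _ _, ?_⟩
  intro n hn
  have hBn : B ≤ n := le_trans (le_max_right _ _) hn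
  have hpos : ∀ k, k ≤ m → 1 ≤ φ^[k] x := by
    intro k hk
    by_contra h
    push_neg at h
    have hk0 : φ^[k] x = 0 := by omega
    have hm0 : φ^[m] x = 0 := by
      have h1 : φ^[m] x = φ^[m-k] (φ^[k] x) := by
        rw [← Function.iterate_add_apply]
        congr 1; omega
      rw [h1, hk0, Function.iterate_fixed hφ0]
    omega
  have hle : ∀ k, k ≤ m → φ^[k] x ≤ n := by
    intro k hk
    exact le_trans (Finset.le_sup (f := fun k => φ^[k] x)
      (Finset.mem_range.mpr (by omega))) hBn
  have hloc : ∀ k, k < m → localFun φ n (φ^[k] x) = φ^[k+1] x := by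
    intro k hk
    have h1 := hpos k hk.le
    have h2 := hle k hk.le
    have h3 : φ (φ^[k] x) = φ^[k+1] x := (Function.iterate_succ_apply' φ k x).symm
    have h4 : 1 ≤ φ^[k+1] x := hpos (k+1) hk
    have h5 : φ^[k+1] x ≤ n := hle (k+1) hk
    unfold localFun
    rw [h3, if_pos ⟨h1, h2, h4, h5⟩]
  -- the kernel vector
  set v : Fin n → ℤ := fun i => ∑ k ∈ Finset.range m,
      (if φ^[k] x = (i : ℕ) + 1 then (1:ℤ) else 0) with hv
  have hxn : x ≤ n := by simpa using hle 0 (by omega)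
  rw [← Matrix.exists_mulVec_eq_zero_iff]
  refine ⟨v, ?_, ?_⟩
  · -- v ≠ 0
    intro h0
    have : v ⟨x - 1, by omega⟩ = 0 := congrFun h0 _
    have hone : (1:ℤ) ≤ v ⟨x - 1, by omega⟩ := by
      rw [hv]
      have := Finset.single_le_sum
        (f := fun k => (if φ^[k] x = ((⟨x-1, by omega⟩ : Fin n) : ℕ) + 1 then (1:ℤ) else 0))
        (fun k _ => by positivity) (Finset.mem_range.mpr (by omega : 0 < m))
      simpa [show x - 1 + 1 = x by omega] using this
    omega
  · -- (1 - M) v = 0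
    funext i
    have hMv : (Mloc φ n).mulVec v i = v i := by
      unfold Matrix.mulVec dotProduct
      rw [hv]
      simp only [Finset.mul_sum]
      rw [Finset.sum_comm]
      have key : ∀ k ∈ Finset.range m,
          (∑ j : Fin n, (Mloc φ n) i j * (if φ^[k] x = (j:ℕ)+1 then (1:ℤ) else 0))
          = if φ^[k+1] x = (i:ℕ)+1 then 1 else 0 := by
        intro k hk
        rw [Finset.mem_range] at hk
        have h1 := hpos k hk.le
        have h2 := hle k hk.le
        rw [Finset.sum_eq_single (⟨φ^[k] x - 1, by omega⟩ : Fin n)]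
        · have hj : ((⟨φ^[k] x - 1, by omega⟩ : Fin n) : ℕ) + 1 = φ^[k] x := by
            simp; omega
          simp only [Mloc, hj, hloc k hk, if_pos rfl]
          simp
        · intro b _ hb
          have hne : φ^[k] x ≠ (b:ℕ)+1 := by
            intro h
            apply hb
            apply Fin.ext
            simp
            omega
          simp [hne]
        · intro h; exact absurd (Finset.mem_univ _) h
      rw [Finset.sum_congr rfl key]
      -- shift the sum
      have hsh : ∑ k ∈ Finset.range m, (if φ^[k+1] x = (i:ℕ)+1 then (1:ℤ) else 0)
          = ∑ k ∈ Finset.range m, (if φ^[k] x = (i:ℕ)+1 then (1:ℤ) else 0) := by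
        have h1 := Finset.sum_range_succ'
          (fun k => (if φ^[k] x = (i:ℕ)+1 then (1:ℤ) else 0)) m
        have h2 := Finset.sum_range_succ
          (fun k => (if φ^[k] x = (i:ℕ)+1 then (1:ℤ) else 0)) m
        rw [h2] at h1
        have h0 : φ^[0] x = x := rfl
        rw [hcyc, h0] at h1
        linarith
      rw [hsh]
    rw [Matrix.sub_mulVec, Matrix.one_mulVec]
    simp [hMv]
end

section
/- Let φ ∈ Φ, n ≥ 2, with φ_n having no cycle. Then the number of nonzero entries of (I − M_n(φ))^{-1} equals ∑_{x=1}^n h(x), where h(x) is the height of x under φ_n, and this quantity is at most binom(n+1, 2) = n(n+1)/2. -/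
/-- The height of `x` under `f`: least `k ≥ 1` with `f^[k] x = 0`. -/
noncomputable def hgt (f : ℕ → ℕ) (x : ℕ) : ℕ := sInf {k | 1 ≤ k ∧ f^[k] x = 0}

section aux
variable (φ : ℕ → ℕ) (n : ℕ)

lemma lf_le (x : ℕ) : localFun φ n x ≤ n := by unfold localFun; split <;> omega

lemma lf_zero : localFun φ n 0 = 0 := by unfold localFun; simp

lemma lf_iter_zero (k : ℕ) : (localFun φ n)^[k] 0 = 0 :=
  Function.iterate_fixed (lf_zero φ n) k

lemma lf_nofix (hfix : ∀ x, 1 ≤ x → φ x ≠ x) (x : ℕ) (hx : 1 ≤ x) :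
    localFun φ n x ≠ x := by
  unfold localFun; split
  · exact hfix x hx
  · omega

variable (hfix : ∀ x, 1 ≤ x → φ x ≠ x)
  (hnc : ∀ x m, 1 ≤ x → x ≤ n → 2 ≤ m → (localFun φ n)^[m] x ≠ x)

include hfix hnc in
lemma lf_nocycle (x m : ℕ) (hx1 : 1 ≤ x) (hxn : x ≤ n) (hm : 1 ≤ m) :
    (localFun φ n)^[m] x ≠ x := by
  rcases eq_or_lt_of_le hm with h | h
  · rw [← h, Function.iterate_one]
    exact lf_nofix φ n hfix x hx1
  · exact hnc x m hx1 hxn h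

include hfix hnc in
lemma lf_exists_zero (hn : 1 ≤ n) (x : ℕ) (hxn : x ≤ n) :
    ∃ k, 1 ≤ k ∧ k ≤ n ∧ (localFun φ n)^[k] x = 0 := by
  rcases Nat.eq_zero_or_pos x with rfl | hx1
  · exact ⟨1, le_refl 1, by omega, by simpa using lf_zero φ n⟩
  by_contra hcon
  push_neg at hcon
  have hmaps : ∀ k ∈ Finset.range (n+1), (localFun φ n)^[k] x ∈ Finset.Icc 1 n := by
    intro k hk
    simp only [Finset.mem_range] at hk
    simp only [Finset.mem_Icc]
    rcases Nat.eq_zero_or_pos k with rfl | hk1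
    · simpa using ⟨hx1, hxn⟩
    · refine ⟨?_, ?_⟩
      · have := hcon k hk1 (by omega); omega
      · obtain ⟨k', rfl⟩ := Nat.exists_eq_succ_of_ne_zero (by omega : k ≠ 0)
        rw [Function.iterate_succ_apply']
        exact lf_le φ n _
  have hcard : (Finset.Icc 1 n).card < (Finset.range (n+1)).card := by
    simp [Nat.card_Icc]
  obtain ⟨i, hi, j, hj, hij, heq⟩ :=
    Finset.exists_ne_map_eq_of_card_lt_of_maps_to hcard hmaps
  have key : ∀ a b : ℕ, a ∈ Finset.range (n+1) → a < b →
      (localFun φ n)^[a] x = (localFun φ n)^[b] x → False := by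
    intro a b ha hab he
    have hmem : (localFun φ n)^[a] x ∈ Finset.Icc 1 n := hmaps a ha
    simp only [Finset.mem_Icc] at hmem
    have hit : (localFun φ n)^[b - a] ((localFun φ n)^[a] x) = (localFun φ n)^[a] x := by
      rw [← Function.iterate_add_apply, show b - a + a = b from by omega]
      exact he.symm
    exact lf_nocycle φ n hfix hnc _ (b - a) hmem.1 hmem.2 (by omega) hit
  rcases lt_or_gt_of_ne hij with h | h
  · exact (key i j hi h heq).elim
  · exact (key j i hj h heq.symm).elim
include hfix hnc in
lemma hgt_spec (hn : 1 ≤ n) (x : ℕ) (hxn : x ≤ n) :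
    1 ≤ hgt (localFun φ n) x ∧ (localFun φ n)^[hgt (localFun φ n) x] x = 0 := by
  obtain ⟨k, h1, _, h0⟩ := lf_exists_zero φ n hfix hnc hn x hxn
  have hne : {k | 1 ≤ k ∧ (localFun φ n)^[k] x = 0}.Nonempty := ⟨k, h1, h0⟩
  exact Nat.sInf_mem hne

lemma hgt_le_of (x k : ℕ) (h1 : 1 ≤ k) (h0 : (localFun φ n)^[k] x = 0) :
    hgt (localFun φ n) x ≤ k := Nat.sInf_le ⟨h1, h0⟩

lemma hgt_iter_ne (x k : ℕ) (hx1 : 1 ≤ x) (hk : k < hgt (localFun φ n) x) :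
    (localFun φ n)^[k] x ≠ 0 := by
  rcases Nat.eq_zero_or_pos k with rfl | hk1
  · simpa using (by omega : x ≠ 0)
  · intro h0
    exact Nat.notMem_of_lt_sInf hk ⟨hk1, h0⟩

include hfix hnc in
lemma iter_zero_of_ge (hn : 1 ≤ n) (x k : ℕ) (hxn : x ≤ n)
    (hk : hgt (localFun φ n) x ≤ k) : (localFun φ n)^[k] x = 0 := by
  have hs := hgt_spec φ n hfix hnc hn x hxn
  rw [show k = (k - hgt (localFun φ n) x) + hgt (localFun φ n) x from by omega,
    Function.iterate_add_apply, hs.2, lf_iter_zero]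

lemma iter_mem (x k : ℕ) (hx1 : 1 ≤ x) (hxn : x ≤ n) (hk : k < hgt (localFun φ n) x) :
    1 ≤ (localFun φ n)^[k] x ∧ (localFun φ n)^[k] x ≤ n := by
  refine ⟨Nat.one_le_iff_ne_zero.mpr (hgt_iter_ne φ n x k hx1 hk), ?_⟩
  rcases Nat.eq_zero_or_pos k with rfl | hk1
  · simpa using hxn
  · obtain ⟨k', rfl⟩ := Nat.exists_eq_succ_of_ne_zero (by omega : k ≠ 0)
    rw [Function.iterate_succ_apply']
    exact lf_le φ n _

include hfix hnc in
lemma hgt_shift (hn : 1 ≤ n) (x m : ℕ) (hx1 : 1 ≤ x) (hxn : x ≤ n)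
    (hm : m < hgt (localFun φ n) x) :
    hgt (localFun φ n) ((localFun φ n)^[m] x) = hgt (localFun φ n) x - m := by
  have hy := iter_mem φ n x m hx1 hxn hm
  have h1 : (localFun φ n)^[hgt (localFun φ n) x - m] ((localFun φ n)^[m] x) = 0 := by
    rw [← Function.iterate_add_apply,
      show hgt (localFun φ n) x - m + m = hgt (localFun φ n) x from by omega]
    exact (hgt_spec φ n hfix hnc hn x hxn).2
  have hle : hgt (localFun φ n) ((localFun φ n)^[m] x) ≤ hgt (localFun φ n) x - m :=
    hgt_le_of φ n _ _ (by omega) h1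
  have hspec2 := hgt_spec φ n hfix hnc hn ((localFun φ n)^[m] x) hy.2
  have h2 : (localFun φ n)^[hgt (localFun φ n) ((localFun φ n)^[m] x) + m] x = 0 := by
    rw [Function.iterate_add_apply]; exact hspec2.2
  have hge : hgt (localFun φ n) x ≤ hgt (localFun φ n) ((localFun φ n)^[m] x) + m :=
    hgt_le_of φ n _ _ (by omega) h2
  omega

include hfix hnc in
lemma hgt_le_n (hn : 1 ≤ n) (x : ℕ) (hx1 : 1 ≤ x) (hxn : x ≤ n) :
    hgt (localFun φ n) x ≤ n := by
  have hinj : Set.InjOn (fun k => (localFun φ n)^[k] x)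
      (Finset.range (hgt (localFun φ n) x)) := by
    intro a ha b hb hab
    simp only [Finset.coe_range, Set.mem_Iio] at ha hb
    have h1 := hgt_shift φ n hfix hnc hn x a hx1 hxn ha
    have h2 := hgt_shift φ n hfix hnc hn x b hx1 hxn hb
    simp only at hab
    rw [hab] at h1
    omega
  have hmaps : ∀ k ∈ Finset.range (hgt (localFun φ n) x),
      (localFun φ n)^[k] x ∈ Finset.Icc 1 n := by
    intro k hk
    simp only [Finset.mem_range] at hk
    exact Finset.mem_Icc.mpr (iter_mem φ n x k hx1 hxn hk)
  have := Finset.card_le_card_of_injOn _ hmaps hinj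
  simpa [Nat.card_Icc] using this

lemma Mpow_apply (k : ℕ) (i j : Fin n) :
    ((Mloc φ n)^k) i j =
      if (localFun φ n)^[k] ((j : ℕ) + 1) = (i : ℕ) + 1 then 1 else 0 := by
  induction k generalizing i j with
  | zero =>
    simp only [pow_zero, Function.iterate_zero, id_eq, Matrix.one_apply]
    by_cases h : i = j
    · subst h; simp
    · have h2 : ¬ ((j:ℕ)+1 = (i:ℕ)+1) := by
        intro hc
        exact h (Fin.ext (by omega)).symm
      rw [if_neg h]; exact (if_neg h2).symm
  | succ k ih =>
    rw [pow_succ, Matrix.mul_apply]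
    simp only [ih, Mloc, Function.iterate_succ_apply]
    rcases Nat.eq_zero_or_pos (localFun φ n ((j:ℕ)+1)) with h0 | h1
    · have hA : ¬ ((localFun φ n)^[k] (localFun φ n ((j:ℕ)+1)) = (i:ℕ)+1) := by
        rw [h0, lf_iter_zero]; omega
      refine Eq.trans ?_ (if_neg hA).symm
      apply Finset.sum_eq_zero
      intro l _
      have hB : ¬ (localFun φ n ((j:ℕ)+1) = (l:ℕ)+1) := by omega
      rw [if_neg hB, mul_zero]
    · have hyn : localFun φ n ((j:ℕ)+1) ≤ n := lf_le φ n _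
      set l₀ : Fin n := ⟨localFun φ n ((j:ℕ)+1) - 1, by omega⟩ with hl₀
      have hval : localFun φ n ((j:ℕ)+1) = (l₀:ℕ)+1 := by
        show localFun φ n ((j:ℕ)+1) = (localFun φ n ((j:ℕ)+1) - 1) + 1
        omega
      have h₀ : ∀ l ∈ Finset.univ, l ≠ l₀ →
          (if (localFun φ n)^[k] ((l:ℕ)+1) = (i:ℕ)+1 then (1:ℤ) else 0) *
          (if localFun φ n ((j:ℕ)+1) = (l:ℕ)+1 then 1 else 0) = 0 := by
        intro l _ hl
        have hB : ¬ (localFun φ n ((j:ℕ)+1) = (l:ℕ)+1) := by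
          intro hc
          refine hl (Fin.ext ?_)
          rw [hval] at hc
          omega
        rw [if_neg hB, mul_zero]
      rw [Finset.sum_eq_single_of_mem l₀ (Finset.mem_univ _) h₀, if_pos hval, mul_one,
        ← hval]
      rfl

include hfix hnc in
lemma Mpow_n (hn : 1 ≤ n) : (Mloc φ n)^n = 0 := by
  ext i j
  rw [Mpow_apply]
  have h0 : (localFun φ n)^[n] ((j:ℕ)+1) = 0 :=
    iter_zero_of_ge φ n hfix hnc hn _ n (by omega)
      (hgt_le_n φ n hfix hnc hn _ (by omega) (by omega))
  rw [h0, if_neg (by omega)]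
  rfl

include hfix hnc in
lemma Minv_eq (hn : 1 ≤ n) :
    (1 - Mloc φ n)⁻¹ = ∑ k ∈ Finset.range n, (Mloc φ n)^k := by
  apply Matrix.inv_eq_left_inv
  have hg := geom_sum_mul (Mloc φ n) n
  rw [← neg_sub (Mloc φ n) 1, mul_neg, hg, Mpow_n φ n hfix hnc hn]
  simp

include hfix hnc in
lemma Minv_apply (hn : 1 ≤ n) (i j : Fin n) :
    (1 - Mloc φ n)⁻¹ i j =
      (((Finset.range n).filter
        (fun k => (localFun φ n)^[k] ((j:ℕ)+1) = (i:ℕ)+1)).card : ℤ) := by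
  rw [Minv_eq φ n hfix hnc hn, Matrix.sum_apply]
  simp only [Mpow_apply]
  rw [Finset.sum_boole]

include hfix hnc in
lemma col_card (hn : 1 ≤ n) (x : ℕ) (hx1 : 1 ≤ x) (hxn : x ≤ n) :
    (Finset.univ.filter (fun i : Fin n =>
        ∃ k, k < n ∧ (localFun φ n)^[k] x = (i:ℕ)+1)).card = hgt (localFun φ n) x := by
  have hhn := hgt_le_n φ n hfix hnc hn x hx1 hxn
  rw [← Finset.card_range (hgt (localFun φ n) x)]
  symm
  apply Finset.card_bij (fun k hk => (⟨(localFun φ n)^[k] x - 1, by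
    have := iter_mem φ n x k hx1 hxn (Finset.mem_range.mp hk); omega⟩ : Fin n))
  · intro k hk
    have hk' := Finset.mem_range.mp hk
    have hm := iter_mem φ n x k hx1 hxn hk'
    simp only [Finset.mem_filter, Finset.mem_univ, true_and]
    exact ⟨k, by omega,
      show (localFun φ n)^[k] x = ((localFun φ n)^[k] x - 1) + 1 from by omega⟩
  · intro a ha b hb hab
    have ha' := Finset.mem_range.mp ha
    have hb' := Finset.mem_range.mp hb
    have hma := iter_mem φ n x a hx1 hxn ha'
    have hmb := iter_mem φ n x b hx1 hxn hb'
    have h1 := hgt_shift φ n hfix hnc hn x a hx1 hxn ha'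
    have h2 := hgt_shift φ n hfix hnc hn x b hx1 hxn hb'
    have hv : (localFun φ n)^[a] x - 1 = (localFun φ n)^[b] x - 1 := congrArg Fin.val hab
    have heq : (localFun φ n)^[a] x = (localFun φ n)^[b] x := by omega
    rw [heq] at h1
    omega
  · intro i hi
    simp only [Finset.mem_filter, Finset.mem_univ, true_and] at hi
    obtain ⟨k, hkn, hk⟩ := hi
    have hklt : k < hgt (localFun φ n) x := by
      by_contra h
      push_neg at h
      rw [iter_zero_of_ge φ n hfix hnc hn x k hxn h] at hk
      omega
    exact ⟨k, Finset.mem_range.mpr hklt,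
      Fin.ext (show (localFun φ n)^[k] x - 1 = (i:ℕ) from by omega)⟩

include hfix hnc in
lemma level_card (hn : 1 ≤ n) (k : ℕ) (hk1 : 1 ≤ k) :
    ((Finset.Icc 1 n).filter (fun x => k ≤ hgt (localFun φ n) x)).card ≤ n + 1 - k := by
  rcases ((Finset.Icc 1 n).filter
      (fun x => k ≤ hgt (localFun φ n) x)).eq_empty_or_nonempty with he | ⟨x₀, hx₀⟩
  · rw [he]; simp
  · simp only [Finset.mem_filter, Finset.mem_Icc] at hx₀
    obtain ⟨⟨hx1, hxn⟩, hkh⟩ := hx₀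
    set S := (Finset.Icc 1 n).filter (fun x => k ≤ hgt (localFun φ n) x) with hS
    set T := (Finset.Icc 1 (k-1)).image
      (fun m => (localFun φ n)^[hgt (localFun φ n) x₀ - m] x₀) with hT
    have hgtT : ∀ m, 1 ≤ m → m ≤ k - 1 →
        hgt (localFun φ n) ((localFun φ n)^[hgt (localFun φ n) x₀ - m] x₀) = m := by
      intro m h1 h2
      rw [hgt_shift φ n hfix hnc hn x₀ _ hx1 hxn (by omega)]
      omega
    have hTcard : T.card = k - 1 := by
      rw [hT, Finset.card_image_of_injOn, Nat.card_Icc]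
      · omega
      · intro a ha b hb hab
        simp only [Finset.coe_Icc, Set.mem_Icc] at ha hb
        simp only at hab
        have h1 := hgtT a ha.1 ha.2
        rw [hab, hgtT b hb.1 hb.2] at h1
        omega
    have hTsub : T ⊆ Finset.Icc 1 n := by
      intro y hy
      rw [hT] at hy
      obtain ⟨m, hm, rfl⟩ := Finset.mem_image.mp hy
      simp only [Finset.mem_Icc] at hm ⊢
      exact iter_mem φ n x₀ _ hx1 hxn (by omega)
    have hdisj : Disjoint S T := by
      rw [Finset.disjoint_right]
      intro y hy hyS
      rw [hT] at hy
      obtain ⟨m, hm, rfl⟩ := Finset.mem_image.mp hy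
      simp only [Finset.mem_Icc] at hm
      rw [hS, Finset.mem_filter] at hyS
      rw [hgtT m hm.1 hm.2] at hyS
      omega
    have hsub : S ∪ T ⊆ Finset.Icc 1 n := by
      apply Finset.union_subset _ hTsub
      rw [hS]; exact Finset.filter_subset _ _
    have hcard := Finset.card_le_card hsub
    rw [Finset.card_union_of_disjoint hdisj, hTcard, Nat.card_Icc] at hcard
    omega

include hfix hnc in
lemma sum_hgt_eq (hn : 1 ≤ n) :
    ∑ x ∈ Finset.Icc 1 n, hgt (localFun φ n) x =
      ∑ k ∈ Finset.Icc 1 n,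
        ((Finset.Icc 1 n).filter (fun x => k ≤ hgt (localFun φ n) x)).card := by
  have h1 : ∀ x ∈ Finset.Icc 1 n, hgt (localFun φ n) x =
      ((Finset.Icc 1 n).filter (fun k => k ≤ hgt (localFun φ n) x)).card := by
    intro x hx
    simp only [Finset.mem_Icc] at hx
    have hle := hgt_le_n φ n hfix hnc hn x hx.1 hx.2
    have heq : (Finset.Icc 1 n).filter (fun k => k ≤ hgt (localFun φ n) x)
        = Finset.Icc 1 (hgt (localFun φ n) x) := by
      ext k
      simp only [Finset.mem_filter, Finset.mem_Icc]
      omega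
    rw [heq, Nat.card_Icc]
    omega
  calc ∑ x ∈ Finset.Icc 1 n, hgt (localFun φ n) x
      = ∑ x ∈ Finset.Icc 1 n,
          ((Finset.Icc 1 n).filter (fun k => k ≤ hgt (localFun φ n) x)).card :=
        Finset.sum_congr rfl h1
    _ = ∑ x ∈ Finset.Icc 1 n, ∑ k ∈ Finset.Icc 1 n,
          (if k ≤ hgt (localFun φ n) x then 1 else 0) :=
        Finset.sum_congr rfl (fun x _ => Finset.card_filter _ _)
    _ = ∑ k ∈ Finset.Icc 1 n, ∑ x ∈ Finset.Icc 1 n,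
          (if k ≤ hgt (localFun φ n) x then 1 else 0) := Finset.sum_comm
    _ = ∑ k ∈ Finset.Icc 1 n,
          ((Finset.Icc 1 n).filter (fun x => k ≤ hgt (localFun φ n) x)).card :=
        Finset.sum_congr rfl (fun k _ => (Finset.card_filter _ _).symm)

lemma gauss_bound : ∑ k ∈ Finset.Icc 1 n, (n + 1 - k) = n * (n + 1) / 2 := by
  have hswap : ∑ k ∈ Finset.Icc 1 n, (n + 1 - k) = ∑ k ∈ Finset.Icc 1 n, k := by
    refine Finset.sum_nbij' (fun k => n + 1 - k) (fun k => n + 1 - k) ?_ ?_ ?_ ?_ ?_ <;>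
      (intro a ha; simp only [Finset.mem_Icc] at ha ⊢) <;> omega
  have htot : (∑ k ∈ Finset.Icc 1 n, (n + 1 - k)) + (∑ k ∈ Finset.Icc 1 n, k)
      = n * (n + 1) := by
    rw [← Finset.sum_add_distrib]
    have : ∀ k ∈ Finset.Icc 1 n, (n + 1 - k) + k = n + 1 := by
      intro k hk
      simp only [Finset.mem_Icc] at hk
      omega
    rw [Finset.sum_congr rfl this, Finset.sum_const, Nat.card_Icc, smul_eq_mul,
      Nat.add_sub_cancel]
  omega

end aux

theorem stmt16 (φ : ℕ → ℕ) (hφ0 : φ 0 = 0) (hfix : ∀ x, 1 ≤ x → φ x ≠ x)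
    (n : ℕ) (hn : 2 ≤ n)
    (hnc : ∀ x m, 1 ≤ x → x ≤ n → 2 ≤ m → (localFun φ n)^[m] x ≠ x) :
    (Finset.univ.filter
        (fun p : Fin n × Fin n => (1 - Mloc φ n)⁻¹ p.1 p.2 ≠ 0)).card =
      ∑ x ∈ Finset.Icc 1 n, hgt (localFun φ n) x ∧
    ∑ x ∈ Finset.Icc 1 n, hgt (localFun φ n) x ≤ n * (n + 1) / 2 := by
  classical
  have hn1 : 1 ≤ n := by omega
  constructor
  · have hcond : ∀ p : Fin n × Fin n, ((1 - Mloc φ n)⁻¹ p.1 p.2 ≠ 0) ↔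
        ∃ k, k < n ∧ (localFun φ n)^[k] ((p.2:ℕ)+1) = (p.1:ℕ)+1 := by
      intro p
      rw [Minv_apply φ n hfix hnc hn1 p.1 p.2, ne_eq, Nat.cast_eq_zero,
        Finset.card_eq_zero]
      constructor
      · intro h
        obtain ⟨k, hk⟩ := Finset.nonempty_iff_ne_empty.mpr h
        exact ⟨k, Finset.mem_range.mp (Finset.mem_filter.mp hk).1,
          (Finset.mem_filter.mp hk).2⟩
      · rintro ⟨k, hkn, hk⟩
        apply Finset.nonempty_iff_ne_empty.mp
        exact ⟨k, Finset.mem_filter.mpr ⟨Finset.mem_range.mpr hkn, hk⟩⟩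
    have hfe : Finset.univ.filter
        (fun p : Fin n × Fin n => (1 - Mloc φ n)⁻¹ p.1 p.2 ≠ 0) =
        Finset.univ.filter (fun p : Fin n × Fin n =>
          ∃ k, k < n ∧ (localFun φ n)^[k] ((p.2:ℕ)+1) = (p.1:ℕ)+1) := by
      apply Finset.filter_congr
      intro p _
      exact hcond p
    rw [hfe, Finset.card_filter, ← Finset.univ_product_univ, Finset.sum_product,
      Finset.sum_comm]
    have hcol : ∀ j : Fin n, (∑ i : Fin n,
        if ∃ k, k < n ∧ (localFun φ n)^[k] ((j:ℕ)+1) = ((i:ℕ)+1) then 1 else 0)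
          = hgt (localFun φ n) ((j:ℕ)+1) := by
      intro j
      rw [← Finset.card_filter]
      exact col_card φ n hfix hnc hn1 ((j:ℕ)+1) (by omega) (by omega)
    rw [Finset.sum_congr rfl (fun j _ => hcol j),
      Fin.sum_univ_eq_sum_range (fun j => hgt (localFun φ n) (j+1)) n]
    refine Finset.sum_nbij' (fun i => i + 1) (fun x => x - 1) ?_ ?_ ?_ ?_ ?_
    · intro a ha; simp only [Finset.mem_range] at ha; simp only [Finset.mem_Icc]; omega
    · intro a ha; simp only [Finset.mem_Icc] at ha; simp only [Finset.mem_range]; omega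
    · intro a _; omega
    · intro a ha; simp only [Finset.mem_Icc] at ha; omega
    · intro a _; rfl
  · rw [sum_hgt_eq φ n hfix hnc hn1]
    calc ∑ k ∈ Finset.Icc 1 n,
          ((Finset.Icc 1 n).filter (fun x => k ≤ hgt (localFun φ n) x)).card
        ≤ ∑ k ∈ Finset.Icc 1 n, (n + 1 - k) :=
          Finset.sum_le_sum (fun k hk =>
            level_card φ n hfix hnc hn1 k (Finset.mem_Icc.mp hk).1)
      _ = n * (n + 1) / 2 := gauss_bound n
end

section
/- Let φ ∈ Φ, n ≥ 2, with φ_n having no cycle. Then the j-th column v_j of (I − M_n(φ))^{-1} equals e_j + ∑_{ν=1}^{h(j)−1} e_{φ_n^ν(j)} for each 1 ≤ j ≤ n, where h(j) is the height of j. -/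
set_option linter.unusedVariables false

lemma localFun_zero (φ : ℕ → ℕ) (n : ℕ) : localFun φ n 0 = 0 := by simp [localFun]

lemma localFun_range (φ : ℕ → ℕ) (n : ℕ) (x : ℕ) :
    localFun φ n x = 0 ∨ (1 ≤ localFun φ n x ∧ localFun φ n x ≤ n) := by
  unfold localFun
  split_ifs with h
  · exact Or.inr ⟨h.2.2.1, h.2.2.2⟩
  · exact Or.inl rfl

lemma iter_range (φ : ℕ → ℕ) (n : ℕ) (x : ℕ) (hx : 1 ≤ x ∧ x ≤ n) (ν : ℕ) :
    (localFun φ n)^[ν] x = 0 ∨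
      (1 ≤ (localFun φ n)^[ν] x ∧ (localFun φ n)^[ν] x ≤ n) := by
  induction ν with
  | zero => exact Or.inr hx
  | succ ν ih =>
    rw [Function.iterate_succ_apply']
    rcases ih with h | h
    · rw [h]; exact Or.inl (localFun_zero φ n)
    · exact localFun_range φ n _

lemma hgt_nonempty (φ : ℕ → ℕ) (n : ℕ) (hfix : ∀ x, 1 ≤ x → φ x ≠ x)
    (hnc : ∀ x m, 1 ≤ x → x ≤ n → 2 ≤ m → (localFun φ n)^[m] x ≠ x)
    (x : ℕ) (hx : 1 ≤ x ∧ x ≤ n) :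
    {k | 1 ≤ k ∧ (localFun φ n)^[k] x = 0}.Nonempty := by
  by_contra hne
  simp only [Set.Nonempty, Set.mem_setOf_eq, not_exists, not_and] at hne
  have hmem : ∀ ν : ℕ, (localFun φ n)^[ν] x ∈ Finset.Icc 1 n := by
    intro ν
    rcases iter_range φ n x hx ν with h | h
    · cases ν with
      | zero => simp at h; omega
      | succ m => exact absurd h (hne (m + 1) (Nat.succ_le_succ (Nat.zero_le m)))
    · exact Finset.mem_Icc.mpr h
  have key : ∀ a b : ℕ, a < b → (localFun φ n)^[a] x ≠ (localFun φ n)^[b] x := by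
    intro a b hlt heq
    set y := (localFun φ n)^[a] x with hy
    have hyr : 1 ≤ y ∧ y ≤ n := Finset.mem_Icc.mp (hmem a)
    have hiter : (localFun φ n)^[b - a] y = y := by
      rw [hy, ← Function.iterate_add_apply, Nat.sub_add_cancel hlt.le, ← heq]
    rcases Nat.lt_or_ge (b - a) 2 with h2 | h2
    · have h1 : b - a = 1 := by omega
      rw [h1, Function.iterate_one] at hiter
      unfold localFun at hiter
      split_ifs at hiter with hc
      · exact hfix y hyr.1 hiter
      · omega
    · exact hnc y (b - a) hyr.1 hyr.2 h2 hiter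
  obtain ⟨a, -, b, -, hab, heq⟩ :=
    Finset.exists_ne_map_eq_of_card_lt_of_maps_to
      (s := Finset.range (n + 1)) (t := Finset.Icc 1 n)
      (by simp) (fun a _ => hmem a)
  rcases hab.lt_or_gt with h | h
  · exact key a b h heq
  · exact key b a h heq.symm

lemma hgt_mem (φ : ℕ → ℕ) (n : ℕ) (hfix : ∀ x, 1 ≤ x → φ x ≠ x)
    (hnc : ∀ x m, 1 ≤ x → x ≤ n → 2 ≤ m → (localFun φ n)^[m] x ≠ x)
    (x : ℕ) (hx : 1 ≤ x ∧ x ≤ n) :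
    1 ≤ hgt (localFun φ n) x ∧ (localFun φ n)^[hgt (localFun φ n) x] x = 0 :=
  Nat.sInf_mem (hgt_nonempty φ n hfix hnc x hx)

lemma iter_lt_hgt (φ : ℕ → ℕ) (n : ℕ) (x : ℕ) (hx : 1 ≤ x ∧ x ≤ n)
    (ν : ℕ) (hν : ν < hgt (localFun φ n) x) :
    1 ≤ (localFun φ n)^[ν] x ∧ (localFun φ n)^[ν] x ≤ n := by
  rcases iter_range φ n x hx ν with h | h
  · exfalso
    cases ν with
    | zero => simp at h; omega
    | succ m =>
      have : hgt (localFun φ n) x ≤ m + 1 :=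
        Nat.sInf_le ⟨Nat.succ_le_succ (Nat.zero_le m), h⟩
      omega
  · exact h


theorem stmt17 (φ : ℕ → ℕ) (hφ0 : φ 0 = 0) (hfix : ∀ x, 1 ≤ x → φ x ≠ x)
    (n : ℕ) (hn : 2 ≤ n)
    (hnc : ∀ x m, 1 ≤ x → x ≤ n → 2 ≤ m → (localFun φ n)^[m] x ≠ x) :
    ∀ i j : Fin n,
      (1 - Mloc φ n)⁻¹ i j =
        (if i = j then 1 else 0) +
          ∑ ν ∈ Finset.Icc 1 (hgt (localFun φ n) ((j : ℕ) + 1) - 1),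
            (if (localFun φ n)^[ν] ((j : ℕ) + 1) = (i : ℕ) + 1 then (1 : ℤ) else 0) := by
  set N : Matrix (Fin n) (Fin n) ℤ := fun i j =>
    (if i = j then 1 else 0) +
      ∑ ν ∈ Finset.Icc 1 (hgt (localFun φ n) ((j : ℕ) + 1) - 1),
        (if (localFun φ n)^[ν] ((j : ℕ) + 1) = (i : ℕ) + 1 then (1 : ℤ) else 0) with hN
  have hinv : (1 - Mloc φ n) * N = 1 := by
    ext i j
    have hx : 1 ≤ (j : ℕ) + 1 ∧ (j : ℕ) + 1 ≤ n :=
      ⟨Nat.le_add_left 1 _, Nat.succ_le_of_lt j.isLt⟩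
    obtain ⟨hh1, hh0⟩ := hgt_mem φ n hfix hnc ((j : ℕ) + 1) hx
    set h : ℕ := hgt (localFun φ n) ((j : ℕ) + 1) with hhdef
    rw [Matrix.sub_mul, Matrix.one_mul, Matrix.sub_apply, Matrix.mul_apply, Matrix.one_apply]
    have hMN : (∑ k : Fin n, Mloc φ n i k * N k j)
        = ∑ ν ∈ Finset.Icc 1 (h - 1),
            (if (localFun φ n)^[ν] ((j : ℕ) + 1) = (i : ℕ) + 1 then (1 : ℤ) else 0) := by
      have step1 : (∑ k : Fin n, Mloc φ n i k * N k j)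
          = Mloc φ n i j + ∑ ν ∈ Finset.Icc 1 (h - 1),
              ∑ k : Fin n, (if localFun φ n ((k : ℕ) + 1) = (i : ℕ) + 1 then (1 : ℤ) else 0)
                * (if (localFun φ n)^[ν] ((j : ℕ) + 1) = (k : ℕ) + 1 then (1 : ℤ) else 0) := by
        simp only [hN, mul_add, Finset.sum_add_distrib, Finset.mul_sum, ← hhdef]
        rw [Finset.sum_comm]
        congr 1
        simp [Mloc, mul_ite]
      rw [step1]
      have step2 : ∀ ν ∈ Finset.Icc 1 (h - 1),
          (∑ k : Fin n, (if localFun φ n ((k : ℕ) + 1) = (i : ℕ) + 1 then (1 : ℤ) else 0)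
              * (if (localFun φ n)^[ν] ((j : ℕ) + 1) = (k : ℕ) + 1 then (1 : ℤ) else 0))
            = (if (localFun φ n)^[ν + 1] ((j : ℕ) + 1) = (i : ℕ) + 1 then (1 : ℤ) else 0) := by
        intro ν hν
        rw [Finset.mem_Icc] at hν
        have hνlt : ν < h := by omega
        obtain ⟨hy1, hyn⟩ := iter_lt_hgt φ n ((j : ℕ) + 1) hx ν (by rw [← hhdef]; omega)
        set y := (localFun φ n)^[ν] ((j : ℕ) + 1) with hy
        have hk0 : y - 1 < n := by omega
        have hcoe : ((⟨y - 1, hk0⟩ : Fin n) : ℕ) = y - 1 := rfl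
        rw [Finset.sum_eq_single (⟨y - 1, hk0⟩ : Fin n)]
        · rw [if_pos (by rw [hcoe]; omega : y = ((⟨y - 1, hk0⟩ : Fin n) : ℕ) + 1), mul_one]
          rw [Function.iterate_succ_apply', ← hy, hcoe, Nat.sub_add_cancel hy1]
        · intro k _ hk
          have hne2 : y ≠ (k : ℕ) + 1 := by
            intro hcon
            apply hk
            apply Fin.ext
            show (k : ℕ) = y - 1
            omega
          simp [hne2]
        · intro hcon
          exact absurd (Finset.mem_univ _) hcon
      rw [Finset.sum_congr rfl step2]
      have hMij : Mloc φ n i j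
          = (if (localFun φ n)^[0 + 1] ((j : ℕ) + 1) = (i : ℕ) + 1 then (1 : ℤ) else 0) := by
        simp [Mloc]
      rw [hMij]
      set G : ℕ → ℤ :=
        fun ν => (if (localFun φ n)^[ν + 1] ((j : ℕ) + 1) = (i : ℕ) + 1 then (1 : ℤ) else 0)
        with hG
      have hIcc : Finset.Icc 1 (h - 1) = Finset.Ico 1 h := by
        rw [← Finset.Ico_add_one_right_eq_Icc]
        congr 1
        omega
      have eL : (∑ ν ∈ Finset.Icc 1 (h - 1), G ν)
          = ∑ ν ∈ Finset.range (h - 1), G (1 + ν) := by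
        rw [hIcc, Finset.sum_Ico_eq_sum_range]
      have eR : (∑ ν ∈ Finset.Icc 1 (h - 1),
            (if (localFun φ n)^[ν] ((j : ℕ) + 1) = (i : ℕ) + 1 then (1 : ℤ) else 0))
          = ∑ ν ∈ Finset.range (h - 1), G ν := by
        rw [hIcc, Finset.sum_Ico_eq_sum_range]
        apply Finset.sum_congr rfl
        intro ν _
        simp [hG, Nat.add_comm 1 ν]
        exact if_congr Iff.rfl rfl rfl
      rw [eL, eR]
      have hGtop : G (h - 1) = 0 := by
        have hhe : (h - 1) + 1 = h := by omega
        simp only [hG, hhe, hh0]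
        norm_num
      have e1 : (∑ ν ∈ Finset.range h, G ν)
          = ∑ ν ∈ Finset.range (h - 1), G ν + G (h - 1) := by
        conv_lhs => rw [show h = (h - 1) + 1 by omega]
        rw [Finset.sum_range_succ]
      have e2 : (∑ ν ∈ Finset.range h, G ν)
          = ∑ ν ∈ Finset.range (h - 1), G (ν + 1) + G 0 := by
        conv_lhs => rw [show h = (h - 1) + 1 by omega]
        rw [Finset.sum_range_succ']
      have e3 : ∀ ν, G (1 + ν) = G (ν + 1) := fun ν => by rw [Nat.add_comm]
      simp only [e3]
      rw [hGtop, add_zero] at e1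
      linarith [e1, e2]
    rw [hMN]
    simp only [hN, ← hhdef]
    ring
  intro i j
  rw [Matrix.inv_eq_right_inv hinv]
end
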